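/- Let Γ be a connected signed graph with n vertices, e(Γ) edges, and frustration index ε(Γ) (the minimum number of edges whose removal makes Γ balanced). Then λ₁(Γ) ≤ √(2(e(Γ) − ε(Γ)) − n + 1). -/

import Mathlib

/-- The largest eigenvalue (index) of a real symmetric matrix. -/
noncomputable def lam1 {n : ℕ} (A : Matrix (Fin n) (Fin n) ℝ) (hA : A.IsHermitian) : ℝ :=
  ⨆ i, hA.eigenvalues i

private lemma pm_neg_of_ne {a b : ℝ} (ha : a = 1 ∨ a = -1) (hb : b = 1 ∨ b = -1)
    (hne : a ≠ b) : a = -b := by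
  rcases ha with rfl | rfl <;> rcases hb with rfl | rfl <;> simp_all

private lemma pm_mul {a b : ℝ} (ha : a = 1 ∨ a = -1) (hb : b = 1 ∨ b = -1) :
    a * b = 1 ∨ a * b = -1 := by
  rcases ha with rfl | rfl <;> rcases hb with rfl | rfl <;> norm_num

/-- Stanić's bound: a connected signed graph `Γ = (G, σ)` with `n` vertices, `e(Γ)` edges and
frustration index `ε(Γ)` (the minimum number of edges whose removal makes `Γ` balanced, where
balanced means the signs are switching-equivalent to all-positive) satisfies
`λ₁(Γ) ≤ √(2(e(Γ) − ε(Γ)) − n + 1)`. -/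
theorem stmt1 {n : ℕ} (hn : 1 ≤ n) (G : SimpleGraph (Fin n)) [DecidableRel G.Adj]
    (hconn : G.Connected)
    (σ : Fin n → Fin n → ℝ)
    (hsym : ∀ i j, σ i j = σ j i)
    (hval : ∀ i j, G.Adj i j → σ i j = 1 ∨ σ i j = -1)
    (A : Matrix (Fin n) (Fin n) ℝ)
    (hAdef : A = fun i j => if G.Adj i j then σ i j else 0)
    (hA : A.IsHermitian)
    (eps : ℕ)
    (heps : IsLeast {k : ℕ | ∃ F ⊆ G.edgeFinset, F.card = k ∧
        ∃ sw : Fin n → ℝ, (∀ v, sw v = 1 ∨ sw v = -1) ∧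
          ∀ i j, G.Adj i j → s(i, j) ∉ F → σ i j = sw i * sw j} eps) :
    lam1 A hA ≤ Real.sqrt (2 * ((G.edgeFinset.card : ℝ) - eps) - n + 1) := by
  classical
  rcases le_or_gt (lam1 A hA) 0 with h0 | hpos0
  · exact h0.trans (Real.sqrt_nonneg _)
  have hne : Nonempty (Fin n) := ⟨⟨0, hn⟩⟩
  obtain ⟨x, hxeig, hxnorm⟩ : ∃ x : Fin n → ℝ,
      A.mulVec x = lam1 A hA • x ∧ ∑ v, x v ^ 2 = 1 := by
    obtain ⟨i₀, hi₀⟩ := Finite.exists_max (fun i => hA.eigenvalues i)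
    have hlam : lam1 A hA = hA.eigenvalues i₀ :=
      le_antisymm (ciSup_le hi₀) (le_ciSup (Set.finite_range _).bddAbove i₀)
    refine ⟨⇑(hA.eigenvectorBasis i₀), ?_, ?_⟩
    · rw [hlam]; exact hA.mulVec_eigenvectorBasis i₀
    · have h1 : ‖hA.eigenvectorBasis i₀‖ = 1 := hA.eigenvectorBasis.orthonormal.1 i₀
      rw [EuclideanSpace.norm_eq] at h1
      have h2 : ∑ v, ‖hA.eigenvectorBasis i₀ v‖ ^ 2 = 1 := by
        have := congrArg (· ^ 2) h1
        simp only [Real.sq_sqrt (by positivity :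
          (0:ℝ) ≤ ∑ v, ‖hA.eigenvectorBasis i₀ v‖ ^ 2)] at this
        simpa using this
      simpa [Real.norm_eq_abs, sq_abs] using h2
  set lam : ℝ := lam1 A hA with hlamdef
  have hpos : 0 < lam := hpos0
  classical
  set y : Fin n → ℝ := fun v => |x v| with hy
  set swf : (Fin n → Bool) → Fin n → ℝ := fun s v =>
    if x v = 0 then (if s v then 1 else -1) else (if 0 < x v then 1 else -1) with hswf
  have hswx : ∀ s v, swf s v * x v = y v := by
    intro s v
    by_cases h : x v = 0
    · simp [hswf, h, hy]
    · rcases lt_or_gt_of_ne h with hlt | hgt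
      · simp [hswf, h, not_lt_of_gt hlt, hy, abs_of_neg hlt]
      · simp [hswf, h, hgt, hy, abs_of_pos hgt]
  have hswpm : ∀ s v, swf s v = 1 ∨ swf s v = -1 := by
    intro s v
    simp only [hswf]
    split_ifs <;> simp
  set PF : (Fin n → Bool) → Finset (Fin n × Fin n) := fun s =>
    Finset.univ.filter fun p => G.Adj p.1 p.2 ∧ σ p.1 p.2 ≠ swf s p.1 * swf s p.2 with hPFdef
  obtain ⟨s, -, hsmin⟩ := Finset.exists_min_image (Finset.univ : Finset (Fin n → Bool))
    (fun s => (PF s).card) ⟨fun _ => true, Finset.mem_univ _⟩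
  set sw : Fin n → ℝ := swf s with hsw
  have hnoniso : ∀ v, ∃ u, G.Adj v u ∧ σ v u = sw v * sw u := by
    intro v
    by_contra hiso
    push_neg at hiso
    have hbad : ∀ u, G.Adj v u → σ v u ≠ sw v * sw u := hiso
    -- x v = 0
    have hxv : x v = 0 := by
      have hv := congrFun hxeig v
      have h1 : ∑ u, A v u * x u = lam * x v := by
        simpa [Matrix.mulVec, dotProduct] using hv
      have h2 : lam * x v ^ 2 = ∑ u, A v u * x u * x v := by
        rw [← Finset.sum_mul, h1]; ring
      have h3 : ∑ u, A v u * x u * x v ≤ 0 := by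
        apply Finset.sum_nonpos
        intro u _
        by_cases hadj : G.Adj v u
        · have hAv : A v u = σ v u := by simp [hAdef, hadj]
          have hs' : σ v u = -(sw v * sw u) :=
            pm_neg_of_ne (hval v u hadj) (pm_mul (hswpm s v) (hswpm s u)) (hbad u hadj)
          have : A v u * x u * x v = -(y u * y v) := by
            rw [hAv, hs', ← hswx s u, ← hswx s v]; ring
          rw [this]
          have := mul_nonneg (abs_nonneg (x u)) (abs_nonneg (x v))
          simp only [hy] at *
          linarith
        · simp [hAdef, hadj]
      have h4 : x v ^ 2 = 0 := by nlinarith [sq_nonneg (x v)]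
      exact (pow_eq_zero_iff two_ne_zero).mp h4
    -- v has a G-neighbor
    obtain ⟨u, hu⟩ : ∃ u, G.Adj v u := by
      by_contra hdeg
      push_neg at hdeg
      have hall : ∀ w : Fin n, w = v := by
        intro w
        by_contra hwv
        obtain ⟨p⟩ := hconn.preconnected v w
        cases p with
        | nil => exact hwv rfl
        | cons h q => exact hdeg _ h
      have hzero : ∑ w, x w ^ 2 = 0 :=
        Finset.sum_eq_zero fun w _ => by rw [hall w, hxv]; ring
      rw [hxnorm] at hzero
      norm_num at hzero
    -- flip the sign at v
    set s' : Fin n → Bool := Function.update s v (!(s v)) with hs'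
    have hswv' : swf s' v = - sw v := by
      simp only [hswf, hsw, hs', Function.update_self, hxv, if_pos rfl]
      cases hsv : s v <;> simp [hsv]
    have hswo : ∀ w, w ≠ v → swf s' w = sw w := by
      intro w hw
      simp only [hswf, hsw, hs', Function.update_of_ne hw]
    have hsub : PF s' ⊆ PF s := by
      rintro ⟨a, b⟩ hp
      simp only [hPFdef, Finset.mem_filter, Finset.mem_univ, true_and] at hp ⊢
      obtain ⟨hadj, hne'⟩ := hp
      refine ⟨hadj, ?_⟩
      by_cases h1 : a = v
      · subst h1; exact hbad b hadj
      · by_cases h2 : b = v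
        · rw [h2]
          rw [h2] at hadj
          intro hcontra
          exact hbad a hadj.symm (by rw [hsym v a, hcontra]; ring)
        · rw [hswo a h1, hswo b h2] at hne'; exact hne'
    have huv : u ≠ v := fun h => G.loopless.irrefl v (h ▸ hu)
    have hmem : (v, u) ∈ PF s := by
      simp only [hPFdef, Finset.mem_filter, Finset.mem_univ, true_and]
      exact ⟨hu, hbad u hu⟩
    have hnotmem : (v, u) ∉ PF s' := by
      simp only [hPFdef, Finset.mem_filter, Finset.mem_univ, true_and, not_and, not_not]
      intro _
      rw [hswv', hswo u huv,
        pm_neg_of_ne (hval v u hu) (pm_mul (hswpm s v) (hswpm s u)) (hbad u hu)]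
      ring
    have hss : PF s' ⊂ PF s :=
      (Finset.ssubset_iff_of_subset hsub).mpr ⟨(v, u), hmem, hnotmem⟩
    exact absurd (hsmin s' (Finset.mem_univ _)) (not_le.mpr (Finset.card_lt_card hss))
  -- the graph of "bad" edges
  set GF : SimpleGraph (Fin n) :=
    { Adj := fun i j => G.Adj i j ∧ σ i j ≠ sw i * sw j,
      symm := by
        constructor
        rintro i j ⟨h1, h2⟩
        refine ⟨h1.symm, fun hc => h2 ?_⟩
        rw [hsym i j, hc]; ring
      loopless := ⟨fun i h => G.loopless.irrefl i h.1⟩ } with hGF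
  haveI : DecidableRel GF.Adj := fun i j => instDecidableAnd
  set k : ℕ := GF.edgeFinset.card with hk
  have hepsle : eps ≤ k := by
    apply heps.2
    refine ⟨GF.edgeFinset, SimpleGraph.edgeFinset_mono (fun a b h => h.1), rfl,
      sw, fun v => hswpm s v, ?_⟩
    intro i j hadj hnot
    by_contra hcon
    exact hnot (by rw [SimpleGraph.mem_edgeFinset, SimpleGraph.mem_edgeSet]; exact ⟨hadj, hcon⟩)
  have hk2 : 2 * k = (PF s).card := by
    rw [hk, SimpleGraph.two_mul_card_edgeFinset]
    congr 1
    ext ⟨a, b⟩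
    simp only [Finset.mem_filter, Finset.mem_univ, true_and, hPFdef, ne_eq]
    exact Iff.rfl
  set m : ℕ := G.edgeFinset.card with hm
  set PB : Finset (Fin n × Fin n) := Finset.univ.filter
    (fun p : Fin n × Fin n => G.Adj p.1 p.2 ∧ σ p.1 p.2 = sw p.1 * sw p.2) with hPBdef
  have hPBcard : PB.card + (PF s).card = 2 * m := by
    have e1 : (Finset.univ.filter fun ((a, b) : Fin n × Fin n) => G.Adj a b) =
        (Finset.univ.filter fun (p : Fin n × Fin n) => G.Adj p.1 p.2) := by
      ext ⟨a, b⟩; simp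
    have e2 : PB = (Finset.univ.filter fun (p : Fin n × Fin n) => G.Adj p.1 p.2).filter
        (fun p => σ p.1 p.2 = sw p.1 * sw p.2) := by
      ext p
      simp only [hPBdef, Finset.mem_filter, Finset.mem_univ, true_and, and_assoc]
    have e3 : PF s = (Finset.univ.filter fun (p : Fin n × Fin n) => G.Adj p.1 p.2).filter
        (fun p => ¬ σ p.1 p.2 = sw p.1 * sw p.2) := by
      ext p
      simp only [hPFdef, Finset.mem_filter, Finset.mem_univ, true_and, ne_eq, and_assoc]
      exact Iff.rfl
    rw [e2, e3, Finset.card_filter_add_card_filter_not, ← e1, hm,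
      ← SimpleGraph.two_mul_card_edgeFinset]
  -- the 0/1 matrix of good edges
  set B : Fin n → Fin n → ℝ :=
    fun u v => if G.Adj u v ∧ σ u v = sw u * sw v then 1 else 0 with hB
  set dB : Fin n → ℝ := fun u => ∑ w, B u w with hdB
  have hB01 : ∀ u v, B u v = 0 ∨ B u v = 1 := by
    intro u v
    by_cases h : G.Adj u v ∧ σ u v = sw u * sw v <;> simp [hB, h]
  have hBnonneg : ∀ u v, 0 ≤ B u v := by
    intro u v; rcases hB01 u v with h | h <;> rw [h] <;> norm_num
  have hBle1 : ∀ u v, B u v ≤ 1 := by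
    intro u v; rcases hB01 u v with h | h <;> rw [h] <;> norm_num
  have hBsymm : ∀ u v, B u v = B v u := by
    intro u v
    have hiff : (G.Adj u v ∧ σ u v = sw u * sw v) ↔ (G.Adj v u ∧ σ v u = sw v * sw u) := by
      constructor
      · rintro ⟨h1, h2⟩; exact ⟨h1.symm, by rw [hsym v u, h2]; ring⟩
      · rintro ⟨h1, h2⟩; exact ⟨h1.symm, by rw [hsym u v, h2]; ring⟩
    simp only [hB]
    exact if_congr hiff rfl rfl
  have hBvv : ∀ v, B v v = 0 := by
    intro v
    have : ¬ (G.Adj v v ∧ σ v v = sw v * sw v) := fun h => G.loopless.irrefl v h.1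
    simp [hB, this]
  have hdB1 : ∀ u, 1 ≤ dB u := by
    intro u
    obtain ⟨w, hw1, hw2⟩ := hnoniso u
    have h1 : B u w = 1 := by simp [hB, hw1, hw2]
    calc (1:ℝ) = B u w := h1.symm
    _ ≤ ∑ w, B u w := Finset.single_le_sum (fun i _ => hBnonneg u i) (Finset.mem_univ w)
  have hsumdB : ∑ u, dB u = 2 * (m:ℝ) - 2 * (k:ℝ) := by
    have e1 : ∑ u, dB u = ((PB.card : ℕ) : ℝ) := by
      simp only [hdB]
      rw [← Finset.sum_product']
      rw [← Finset.univ_product_univ] at *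
      simp only [hB, hPBdef]
      rw [Finset.sum_boole]
    have e2 : (PB.card : ℝ) + 2 * (k : ℝ) = 2 * (m : ℝ) := by
      have := hPBcard
      rw [← hk2] at this
      exact_mod_cast congrArg (Nat.cast : ℕ → ℝ) this
    rw [e1]; linarith
  -- the quadratic form chain
  have hynn : ∀ v, 0 ≤ y v := fun v => abs_nonneg _
  have hynorm : ∑ v, y v ^ 2 = 1 := by
    rw [← hxnorm]; apply Finset.sum_congr rfl; intro v _; rw [hy]; simp [sq_abs]
  set By : Fin n → ℝ := fun v => ∑ u, B v u * y u with hBydef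
  have hBynn : ∀ v, 0 ≤ By v :=
    fun v => Finset.sum_nonneg fun u _ => mul_nonneg (hBnonneg v u) (hynn u)
  have step1 : lam ≤ ∑ v, y v * By v := by
    have e0 : lam = ∑ v, (∑ u, A v u * x u) * x v := by
      calc lam = lam * ∑ v, x v ^ 2 := by rw [hxnorm, mul_one]
      _ = ∑ v, (lam * x v) * x v := by rw [Finset.mul_sum]; apply Finset.sum_congr rfl
                                       intro v _; ring
      _ = ∑ v, (∑ u, A v u * x u) * x v := by
          apply Finset.sum_congr rfl
          intro v _
          have := congrFun hxeig v
          simp only [Matrix.mulVec, dotProduct, Pi.smul_apply, smul_eq_mul] at this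
          rw [this]
    rw [e0]
    apply Finset.sum_le_sum
    intro v _
    rw [Finset.sum_mul, hBydef, Finset.mul_sum]
    apply Finset.sum_le_sum
    intro u _
    by_cases hadj : G.Adj v u
    · have hAv : A v u = σ v u := by simp [hAdef, hadj]
      by_cases hgood : σ v u = sw v * sw u
      · have hB1 : B v u = 1 := by simp [hB, hadj, hgood]
        apply le_of_eq
        rw [hAv, hgood, hB1, ← hswx s u, ← hswx s v]
        ring
      · have hB0 : B v u = 0 := by simp [hB, hgood]
        have hs' : σ v u = -(sw v * sw u) :=
          pm_neg_of_ne (hval v u hadj) (pm_mul (hswpm s v) (hswpm s u)) hgood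
        have he : A v u * x u * x v = -(y u * y v) := by
          rw [hAv, hs', ← hswx s u, ← hswx s v]; ring
        rw [he, hB0]
        have := mul_nonneg (hynn u) (hynn v)
        nlinarith
    · have hA0 : A v u = 0 := by simp [hAdef, hadj]
      have hB0 : B v u = 0 := by simp [hB, hadj]
      rw [hA0, hB0]
      nlinarith
  have hTnn : 0 ≤ ∑ v, y v * By v :=
    Finset.sum_nonneg fun v _ => mul_nonneg (hynn v) (hBynn v)
  have step2 : ∑ v, y v * By v ≤ Real.sqrt (∑ v, By v ^ 2) := by
    apply Real.le_sqrt_of_sq_le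
    calc (∑ v, y v * By v) ^ 2 ≤ (∑ v, y v ^ 2) * ∑ v, By v ^ 2 :=
      Finset.sum_mul_sq_le_sq_mul_sq Finset.univ y By
    _ = ∑ v, By v ^ 2 := by rw [hynorm, one_mul]
  have step3 : ∀ v, By v ^ 2 ≤ dB v * ∑ u, B v u * y u ^ 2 := by
    intro v
    have hcs := Finset.sum_mul_sq_le_sq_mul_sq Finset.univ
      (fun u => B v u) (fun u => B v u * y u)
    have e1 : ∑ u, B v u * (B v u * y u) = By v := by
      rw [hBydef]
      apply Finset.sum_congr rfl
      intro u _
      rcases hB01 v u with h | h <;> rw [h] <;> ring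
    have e2 : ∑ u, (B v u) ^ 2 = dB v := by
      rw [hdB]
      apply Finset.sum_congr rfl
      intro u _
      rcases hB01 v u with h | h <;> rw [h] <;> ring
    have e3 : ∑ u, (B v u * y u) ^ 2 = ∑ u, B v u * y u ^ 2 := by
      apply Finset.sum_congr rfl
      intro u _
      rcases hB01 v u with h | h <;> rw [h] <;> ring
    rw [e1, e2, e3] at hcs
    exact hcs
  have step4 : ∑ v, dB v * ∑ u, B v u * y u ^ 2 = ∑ u, y u ^ 2 * ∑ v, B u v * dB v := by
    simp_rw [Finset.mul_sum]
    rw [Finset.sum_comm]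
    apply Finset.sum_congr rfl
    intro u _
    apply Finset.sum_congr rfl
    intro v _
    rw [hBsymm u v]; ring
  have step5 : ∀ u, ∑ v, B u v * dB v ≤ 2 * (m:ℝ) - 2 * (k:ℝ) - (n:ℝ) + 1 := by
    intro u
    have key : (n:ℝ) - 1 ≤ ∑ v, (1 - B u v) * dB v := by
      have hsplit : ∑ v, (1 - B u v) * dB v
          = (1 - B u u) * dB u + ∑ v ∈ Finset.univ.erase u, (1 - B u v) * dB v :=
        (Finset.add_sum_erase _ _ (Finset.mem_univ u)).symm
      have hsplit2 : ∑ v, B u v = B u u + ∑ v ∈ Finset.univ.erase u, B u v :=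
        (Finset.add_sum_erase _ _ (Finset.mem_univ u)).symm
      have hcard : ((Finset.univ.erase u).card : ℝ) = (n:ℝ) - 1 := by
        rw [Finset.card_erase_of_mem (Finset.mem_univ u)]
        simp only [Finset.card_univ, Fintype.card_fin]
        have : 1 ≤ n := hn
        push_cast [Nat.cast_sub this]
        ring
      have hbound : ∑ v ∈ Finset.univ.erase u, (1 - B u v)
          ≤ ∑ v ∈ Finset.univ.erase u, (1 - B u v) * dB v := by
        apply Finset.sum_le_sum
        intro v _
        nlinarith [hdB1 v, hBle1 u v, hBnonneg u v]
      have hBsum : ∑ v ∈ Finset.univ.erase u, B u v = dB u - B u u := by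
        rw [hdB]; dsimp only; linarith [hsplit2]
      have hsum1 : ∑ v ∈ Finset.univ.erase u, (1 - B u v)
          = ((n:ℝ) - 1) - (dB u - B u u) := by
        rw [Finset.sum_sub_distrib, Finset.sum_const, nsmul_eq_mul, mul_one, hcard, hBsum]
      rw [hsplit, hBvv]
      rw [hBvv] at hsum1
      linarith [hbound, hsum1]
    have e1 : ∑ v, B u v * dB v = ∑ v, dB v - ∑ v, (1 - B u v) * dB v := by
      rw [← Finset.sum_sub_distrib]
      apply Finset.sum_congr rfl
      intro v _; ring
    rw [e1, hsumdB]
    linarith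
  have step6 : ∑ v, By v ^ 2 ≤ 2 * (m:ℝ) - 2 * (k:ℝ) - (n:ℝ) + 1 := by
    calc ∑ v, By v ^ 2 ≤ ∑ v, dB v * ∑ u, B v u * y u ^ 2 :=
      Finset.sum_le_sum fun v _ => step3 v
    _ = ∑ u, y u ^ 2 * ∑ v, B u v * dB v := step4
    _ ≤ ∑ u, y u ^ 2 * (2 * (m:ℝ) - 2 * (k:ℝ) - (n:ℝ) + 1) :=
      Finset.sum_le_sum fun u _ => mul_le_mul_of_nonneg_left (step5 u) (sq_nonneg _)
    _ = 2 * (m:ℝ) - 2 * (k:ℝ) - (n:ℝ) + 1 := by rw [← Finset.sum_mul, hynorm, one_mul]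
  have final : lam ≤ Real.sqrt (2 * ((m:ℝ) - (eps:ℝ)) - (n:ℝ) + 1) := by
    refine (step1.trans (step2.trans ?_))
    refine (Real.sqrt_le_sqrt step6).trans (Real.sqrt_le_sqrt ?_)
    have : (eps : ℝ) ≤ (k : ℝ) := by exact_mod_cast hepsle
    linarith

  exact final
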